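/- Let F : ℝ^(N×n) → ℝ be Lipschitz and rank-one convex (i.e., t ↦ F(ξ + t a⊗b) is convex for all ξ and all vectors a ∈ ℝ^N, b ∈ ℝ^n), and suppose F^∞(z) = lim_{t→∞} F(tz)/t exists for all z. Then for every matrix z of rank at most one, F^∞(z) = cd_F(z). -/

import Mathlib

open Filter

/-- The convex deficiency integrand via difference quotients. -/
noncomputable def cdF {N n : ℕ} (F : EuclideanSpace ℝ (Fin N × Fin n) → ℝ)
    (z : EuclideanSpace ℝ (Fin N × Fin n)) : ℝ :=
  sSup {y : ℝ | ∃ (ξ : EuclideanSpace ℝ (Fin N × Fin n)) (t : ℝ),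
    0 < t ∧ y = (F (ξ + t • z) - F ξ) / t}

/-- The rank-one matrix `a ⊗ b`, viewed as an element of `ℝ^(N×n)`. -/
noncomputable def tensor {N n : ℕ} (a : Fin N → ℝ) (b : Fin n → ℝ) :
    EuclideanSpace ℝ (Fin N × Fin n) :=
  WithLp.toLp 2 (fun p : Fin N × Fin n => a p.1 * b p.2)

/-- for `F` Lipschitz and rank-one convex with recession function
`F^∞`, one has `F^∞(z) = cd_F(z)` for every matrix `z` of rank at most one. -/
theorem cdF_eq_recession_on_rank_one (N n : ℕ) (L : NNReal)
    (F Finf : EuclideanSpace ℝ (Fin N × Fin n) → ℝ) (hF : LipschitzWith L F)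
    (hrc : ∀ (ξ : EuclideanSpace ℝ (Fin N × Fin n)) (a : Fin N → ℝ) (b : Fin n → ℝ),
      ConvexOn ℝ Set.univ (fun t : ℝ => F (ξ + t • tensor a b)))
    (hrec : ∀ z, Tendsto (fun t : ℝ => F (t • z) / t) atTop (nhds (Finf z)))
    (z : EuclideanSpace ℝ (Fin N × Fin n))
    (hz : ∃ (a : Fin N → ℝ) (b : Fin n → ℝ), z = tensor a b) :
    Finf z = cdF F z := by
  obtain ⟨a, b, rfl⟩ := hz
  set z := tensor a b
  set S : Set ℝ := {y : ℝ | ∃ (ξ : EuclideanSpace ℝ (Fin N × Fin n)) (t : ℝ),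
    0 < t ∧ y = (F (ξ + t • z) - F ξ) / t} with hS
  -- every element of S is ≤ Finf z
  have key : ∀ y ∈ S, y ≤ Finf z := by
    rintro y ⟨ξ, t, ht, rfl⟩
    have hconv : ConvexOn ℝ Set.univ (fun s : ℝ => F (ξ + s • z)) := hrc ξ a b
    -- the shifted difference quotients tend to Finf z
    have htend : Tendsto (fun s : ℝ => (F (ξ + s • z) - F ξ) / s) atTop (nhds (Finf z)) := by
      have h0 : Tendsto (fun s : ℝ => (F (ξ + s • z) - F (s • z) - F ξ) / s)
          atTop (nhds 0) := by
        have hg : Tendsto (fun s : ℝ => ((L : ℝ) * ‖ξ‖ + ‖F ξ‖) / s) atTop (nhds 0) :=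
          Tendsto.div_atTop tendsto_const_nhds tendsto_id
        refine squeeze_zero_norm' ?_ hg
        filter_upwards [eventually_gt_atTop (0 : ℝ)] with s hs
        rw [Real.norm_eq_abs, abs_div, abs_of_pos hs]
        apply div_le_div_of_nonneg_right _ hs.le
        calc |F (ξ + s • z) - F (s • z) - F ξ|
            ≤ |F (ξ + s • z) - F (s • z)| + |F ξ| := abs_sub _ _
          _ ≤ (L : ℝ) * ‖ξ‖ + ‖F ξ‖ := by
              have h2 := hF.dist_le_mul (ξ + s • z) (s • z)
              rw [Real.dist_eq, dist_eq_norm, add_sub_cancel_right] at h2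
              have h3 : |F ξ| = ‖F ξ‖ := (Real.norm_eq_abs _).symm
              linarith
      have h1 := (h0.add (hrec z))
      rw [zero_add] at h1
      refine h1.congr' ?_
      filter_upwards [eventually_gt_atTop (0 : ℝ)] with s hs
      field_simp
      ring
    refine ge_of_tendsto htend ?_
    filter_upwards [eventually_ge_atTop t] with s hst
    have := hconv.secant_mono (a := 0) (x := t) (y := s)
      (Set.mem_univ _) (Set.mem_univ _) (Set.mem_univ _) ht.ne' (ht.trans_le hst).ne' hst
    simpa using this
  have hne : S.Nonempty := ⟨(F (0 + (1:ℝ) • z) - F 0) / 1, 0, 1, one_pos, rfl⟩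
  have hbdd : BddAbove S := ⟨Finf z, key⟩
  refine le_antisymm ?_ (csSup_le hne key)
  -- Finf z ≤ sSup S
  have htend : Tendsto (fun t : ℝ => (F (0 + t • z) - F 0) / t) atTop (nhds (Finf z)) := by
    have h0 : Tendsto (fun t : ℝ => (- F 0) / t) atTop (nhds 0) :=
      Tendsto.div_atTop tendsto_const_nhds tendsto_id
    have h1 := (hrec z).add h0
    rw [add_zero] at h1
    refine h1.congr' ?_
    filter_upwards [eventually_gt_atTop (0 : ℝ)] with t ht
    rw [zero_add]
    field_simp
    ring
  refine le_of_tendsto htend ?_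
  filter_upwards [eventually_gt_atTop (0 : ℝ)] with t ht
  exact le_csSup hbdd ⟨0, t, ht, rfl⟩
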